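/- Let 0 → M1 →f M2 →g M3 → 0 be a short exact sequence of finitely presented torsion O-modules. For a ∈ O and a finitely presented torsion O-module M, let F_a(M) ⊆ M ⊗_O k denote the image of the a-torsion submodule M[a] = { x ∈ M : a·x = 0 } under the quotient map M → M/mM = M ⊗_O k; the maps f and g induce k-linear maps F_a(M1) → F_a(M2) → F_a(M3). Then the sequence 0 → M1 → M2 → M3 → 0 splits if and only if, for every a ∈ O, the induced complex 0 → F_a(M1) → F_a(M2) → F_a(M3) → 0 is a short exact sequence of k-vector spaces. -/

import Mathlib

open Submodule

section Aux
variable {O : Type*} [CommRing O]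

/-- In a valuation ring, a nonempty finite family has a dvd-minimal element. -/
theorem exists_dvd_min [IsDomain O] [ValuationRing O] {ι : Type*} (F : Finset ι) (f : ι → O)
    (h : F.Nonempty) : ∃ i ∈ F, ∀ j ∈ F, f i ∣ f j := by
  classical
  induction F using Finset.induction_on with
  | empty => exact absurd h (by simp)
  | @insert a s ha ih =>
    rcases s.eq_empty_or_nonempty with rfl | hs
    · exact ⟨a, by simp⟩
    · obtain ⟨i, hi, hmin⟩ := ih hs
      rcases ValuationRing.dvd_total (f a) (f i) with hd | hd
      · exact ⟨a, Finset.mem_insert_self _ _, by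
          intro j hj
          rcases Finset.mem_insert.mp hj with rfl | hj
          · exact dvd_rfl
          · exact hd.trans (hmin j hj)⟩
      · exact ⟨i, Finset.mem_insert_of_mem hi, by
          intro j hj
          rcases Finset.mem_insert.mp hj with rfl | hj
          · exact hd
          · exact hmin j hj⟩

open scoped Classical in
noncomputable def odiv (d x : O) : O := if h : d ∣ x then h.choose else 0

theorem odiv_spec {d x : O} (h : d ∣ x) : d * odiv d x = x := by
  classical
  rw [odiv]
  rw [dif_pos h]
  exact h.choose_spec.symm

theorem ideal_smul_top (I : Ideal O) : (I • ⊤ : Submodule O O) = I := by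
  apply le_antisymm
  · rw [Submodule.smul_le]
    intro r hr n _
    simpa [smul_eq_mul] using I.mul_mem_right n hr
  · intro a ha
    simpa using Submodule.smul_mem_smul ha (Submodule.mem_top (R := O) (x := (1 : O)))

theorem smul_top_quot {M : Type*} [AddCommGroup M] [Module O M] (I : Ideal O)
    (p : Submodule O M) {x : M ⧸ p} (hx : x ∈ (I • ⊤ : Submodule O (M ⧸ p))) :
    ∃ t ∈ (I • ⊤ : Submodule O M), Submodule.Quotient.mk t = x := by
  have : (I • ⊤ : Submodule O (M ⧸ p)) = Submodule.map p.mkQ (I • ⊤ : Submodule O M) := by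
    rw [Submodule.map_smul'', Submodule.map_top, Submodule.range_mkQ]
  rw [this] at hx
  obtain ⟨t, ht, rfl⟩ := hx
  exact ⟨t, ht, rfl⟩

theorem smul_top_prod_le {A B : Type*} [AddCommGroup A] [Module O A] [AddCommGroup B]
    [Module O B] (I : Ideal O) :
    (I • ⊤ : Submodule O (A × B)) ≤ (I • ⊤ : Submodule O A).prod (I • ⊤ : Submodule O B) := by
  refine Submodule.smul_le.mpr fun r hr x _ => ⟨?_, ?_⟩
  · exact Submodule.smul_mem_smul hr Submodule.mem_top
  · exact Submodule.smul_mem_smul hr Submodule.mem_top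

theorem smul_top_map_equiv {M N : Type*} [AddCommGroup M] [Module O M] [AddCommGroup N]
    [Module O N] (I : Ideal O) (e : M ≃ₗ[O] N) {x : M}
    (hx : x ∈ (I • ⊤ : Submodule O M)) : e x ∈ (I • ⊤ : Submodule O N) := by
  have : (I • ⊤ : Submodule O N) = Submodule.map (e : M →ₗ[O] N) (I • ⊤ : Submodule O M) := by
    rw [Submodule.map_smul'', Submodule.map_top, LinearEquiv.range]
  rw [this]
  exact ⟨x, hx, rfl⟩

end Aux

section Equivs
variable {O : Type*} [CommRing O]

/-- Quotient of a product by a product of submodules. -/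
noncomputable def prodQuotEquiv {A B : Type*} [AddCommGroup A] [Module O A]
    [AddCommGroup B] [Module O B] (p : Submodule O A) (q : Submodule O B) :
    ((A × B) ⧸ (p.prod q)) ≃ₗ[O] (A ⧸ p) × (B ⧸ q) := by
  have hker : LinearMap.ker ((p.mkQ).prodMap (q.mkQ)) = p.prod q := by
    ext x
    simp [LinearMap.mem_ker, Prod.ext_iff, Submodule.Quotient.mk_eq_zero,
      Submodule.mem_prod]
  have hsurj : Function.Surjective ((p.mkQ).prodMap (q.mkQ)) :=
    Prod.map_surjective.mpr ⟨p.mkQ_surjective, q.mkQ_surjective⟩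
  exact (Submodule.quotEquivOfEq _ _ hker.symm).trans
    (LinearMap.quotKerEquivOfSurjective _ hsurj)

/-- Splitting off the 0-th factor of a finite product of modules. -/
noncomputable def piSuccEquiv {n : ℕ} (φ : Fin (n + 1) → Type*)
    [∀ i, AddCommGroup (φ i)] [∀ i, Module O (φ i)] :
    ((i : Fin (n + 1)) → φ i) ≃ₗ[O] (φ 0) × ((i : Fin n) → φ i.succ) := by
  refine LinearEquiv.ofLinear
    ((LinearMap.proj 0).prod (LinearMap.pi fun i => LinearMap.proj i.succ))
    (LinearMap.pi fun j => Fin.cases (LinearMap.fst O (φ 0) ((i : Fin n) → φ i.succ))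
      (fun i => (LinearMap.proj i).comp (LinearMap.snd O (φ 0) ((i : Fin n) → φ i.succ))) j)
    ?_ ?_
  · ext x <;> simp [LinearMap.pi_apply]
  · apply LinearMap.ext
    intro x
    funext j
    induction j using Fin.cases <;> simp [LinearMap.pi_apply]

@[simp] theorem piSuccEquiv_symm_apply {n : ℕ} (φ : Fin (n + 1) → Type*)
    [∀ i, AddCommGroup (φ i)] [∀ i, Module O (φ i)] (p : (φ 0) × ((i : Fin n) → φ i.succ))
    (j : Fin (n + 1)) :
    (piSuccEquiv (O := O) φ).symm p j =
      Fin.cases p.1 (fun i => p.2 i) j := by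
  rcases p with ⟨u, y⟩
  induction j using Fin.cases <;>
    simp [piSuccEquiv, LinearEquiv.ofLinear_symm_apply, LinearMap.pi_apply]

/-- The coordinate-split equivalence `O^(n+1) ≃ O × O^n`. -/
noncomputable def splitEquiv (n : ℕ) : (Fin (n + 1) → O) ≃ₗ[O] O × (Fin n → O) :=
  piSuccEquiv (fun _ => O)

theorem splitEquiv_apply {n : ℕ} (x : Fin (n + 1) → O) :
    splitEquiv n x = (x 0, fun i => x i.succ) := rfl

end Equivs

section SNF
variable {O : Type*} [CommRing O]

theorem span_sub_smul_insert {M : Type*} [AddCommGroup M] [Module O M] (x : M) (T : Set M)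
    (k : M → O) :
    span O (insert x ((fun w => w - k w • x) '' T)) = span O (insert x T) := by
  apply le_antisymm
  · rw [Submodule.span_le]
    rintro y (rfl | ⟨w, hw, rfl⟩)
    · exact subset_span (Set.mem_insert _ _)
    · exact sub_mem (subset_span (Set.mem_insert_of_mem _ hw))
        (Submodule.smul_mem _ _ (subset_span (Set.mem_insert _ _)))
  · rw [Submodule.span_le]
    rintro y (rfl | hw)
    · exact subset_span (Set.mem_insert _ _)
    · have : y = (y - k y • x) + k y • x := by abel
      rw [this]
      exact add_mem (subset_span (Set.mem_insert_of_mem _ ⟨y, hw, rfl⟩))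
        (Submodule.smul_mem _ _ (subset_span (Set.mem_insert _ _)))

theorem snf [IsDomain O] [ValuationRing O] :
    ∀ (n : ℕ) (S : Set (Fin n → O)), S.Finite →
      ∃ (m : ℕ) (c : Fin m → O),
        Nonempty (((Fin n → O) ⧸ span O S) ≃ₗ[O]
          ((i : Fin m) → O ⧸ (span O {c i} : Submodule O O))) := by
  intro n
  induction n with
  | zero =>
    intro S _
    refine ⟨0, Fin.elim0, ⟨?_⟩⟩
    haveI : Subsingleton ((Fin 0 → O) ⧸ span O S) :=
      (Submodule.mkQ_surjective _).subsingleton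
    exact LinearEquiv.ofSubsingleton _ _
  | succ n IH =>
    intro S hfin
    classical
    by_cases hS : S.Nonempty
    case neg =>
      rw [Set.not_nonempty_iff_eq_empty] at hS
      subst hS
      refine ⟨n + 1, fun _ => 0, ⟨?_⟩⟩
      exact (Submodule.quotEquivOfEqBot _ (by rw [Submodule.span_empty])).trans
        (LinearEquiv.piCongrRight fun _ =>
          (Submodule.quotEquivOfEqBot _ (Submodule.span_zero_singleton O)).symm)
    case pos =>
    -- pick a dvd-minimal entry
    obtain ⟨⟨v₀, j₀⟩, hmem, hmin⟩ :=
      exists_dvd_min (hfin.toFinset ×ˢ (Finset.univ : Finset (Fin (n + 1))))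
        (fun p => p.1 p.2)
        ((Set.Finite.toFinset_nonempty hfin |>.mpr hS).product ⟨0, Finset.mem_univ 0⟩)
    have hv₀ : v₀ ∈ S := by
      have := (Finset.mem_product.mp hmem).1
      rwa [Set.Finite.mem_toFinset] at this
    set d : O := v₀ j₀ with hd_def
    have hd : ∀ v ∈ S, ∀ j, d ∣ v j := by
      intro v hv j
      exact hmin (v, j) (Finset.mem_product.mpr ⟨(Set.Finite.mem_toFinset hfin).mpr hv,
        Finset.mem_univ _⟩)
    -- swap coordinates 0 and j₀
    set σe : Fin (n + 1) ≃ Fin (n + 1) := Equiv.swap 0 j₀ with hσe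
    set σ : (Fin (n + 1) → O) ≃ₗ[O] (Fin (n + 1) → O) := LinearEquiv.funCongrLeft O O σe
      with hσ
    have hσapp : ∀ v : Fin (n + 1) → O, σ v = v ∘ σe := fun _ => rfl
    set T : Set (Fin (n + 1) → O) := σ '' S with hT_def
    have hTfin : T.Finite := hfin.image _
    have hT : ∀ w ∈ T, ∀ j, d ∣ w j := by
      rintro w ⟨v, hv, rfl⟩ j
      exact hd v hv (σe j)
    set w₀ : Fin (n + 1) → O := σ v₀ with hw₀_def
    have hw₀T : w₀ ∈ T := ⟨v₀, hv₀, rfl⟩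
    have hw₀0 : w₀ 0 = d := by
      show v₀ (σe 0) = d
      rw [hσe, Equiv.swap_apply_left]
    -- row reduction
    set T' : Set (Fin (n + 1) → O) := (fun w => w - odiv d (w 0) • w₀) '' T with hT'_def
    have hT'fin : T'.Finite := hTfin.image _
    have hspanT : span O T = span O (insert w₀ T') := by
      rw [hT'_def, span_sub_smul_insert, Set.insert_eq_self.mpr hw₀T]
    have hT'0 : ∀ w' ∈ T', w' 0 = 0 := by
      rintro w' ⟨w, hw, rfl⟩
      have : d ∣ w 0 := hT w hw 0
      simp only [Pi.sub_apply, Pi.smul_apply, smul_eq_mul, hw₀0]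
      rw [mul_comm, odiv_spec this, sub_self]
    -- column reduction
    set r : Fin (n + 1) → O := fun j => if j = 0 then 0 else odiv d (w₀ j) with hr
    have hr0 : r 0 = 0 := by rw [hr]; simp
    set A : (Fin (n + 1) → O) →ₗ[O] (Fin (n + 1) → O) :=
      LinearMap.pi (fun j => LinearMap.proj j - r j • LinearMap.proj 0) with hA
    set B : (Fin (n + 1) → O) →ₗ[O] (Fin (n + 1) → O) :=
      LinearMap.pi (fun j => LinearMap.proj j + r j • LinearMap.proj 0) with hB
    have hAapp : ∀ x j, A x j = x j - r j * x 0 := by intro x j; rfl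
    have hBapp : ∀ x j, B x j = x j + r j * x 0 := by intro x j; rfl
    set τ : (Fin (n + 1) → O) ≃ₗ[O] (Fin (n + 1) → O) := LinearEquiv.ofLinear A B
      (by
        apply LinearMap.ext; intro x; funext j
        simp only [LinearMap.comp_apply, LinearMap.id_apply]
        rw [hAapp, hBapp, hBapp, hr0]
        ring)
      (by
        apply LinearMap.ext; intro x; funext j
        simp only [LinearMap.comp_apply, LinearMap.id_apply]
        rw [hBapp, hAapp, hAapp, hr0]
        ring) with hτ
    have hτapp : ∀ x, τ x = A x := fun _ => rfl
    have hτw₀ : τ w₀ = Pi.single 0 d := by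
      funext j
      rw [hτapp, hAapp]
      by_cases hj : j = 0
      · subst hj
        rw [hr0, Pi.single_eq_same, hw₀0]
        ring
      · rw [hr]
        simp only [if_neg hj]
        rw [hw₀0, mul_comm, odiv_spec (hT w₀ hw₀T j), Pi.single_eq_of_ne hj, sub_self]
    have hτT' : ∀ w' ∈ T', τ w' = w' := by
      intro w' hw'
      funext j
      rw [hτapp, hAapp]
      by_cases hj : j = 0
      · subst hj; rw [hr0]; ring
      · rw [hT'0 w' hw', mul_zero, sub_zero]
    -- split off coordinate 0
    set ρ : (Fin (n + 1) → O) ≃ₗ[O] O × (Fin n → O) := splitEquiv n with hρ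
    set T'' : Set (Fin n → O) := (fun w : Fin (n + 1) → O => fun i => w i.succ) '' T'
      with hT''_def
    have hT''fin : T''.Finite := hT'fin.image _
    have hρT' : ρ '' T' = (LinearMap.inr O O (Fin n → O)) '' T'' := by
      conv_rhs => rw [hT''_def, Set.image_image]
      apply Set.image_congr
      intro w' hw'
      rw [hρ, splitEquiv_apply]
      refine Prod.ext ?_ rfl
      exact hT'0 w' hw'
    have hρpsd : ρ (Pi.single 0 d) = (LinearMap.inl O O (Fin n → O)) d := by
      rw [hρ, splitEquiv_apply, LinearMap.inl_apply]
      refine Prod.ext ?_ ?_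
      · exact Pi.single_eq_same (M := fun _ : Fin (n+1) => O) 0 d
      · funext i
        exact Pi.single_eq_of_ne (Fin.succ_ne_zero i) d
    -- assemble the submodule equalities
    have hmap1 : Submodule.map (σ : (Fin (n+1) → O) →ₗ[O] (Fin (n+1) → O)) (span O S)
        = span O (insert w₀ T') := by
      rw [Submodule.map_span, ← hspanT]
      rfl
    have hmap2 : Submodule.map (τ : (Fin (n+1) → O) →ₗ[O] (Fin (n+1) → O))
        (span O (insert w₀ T')) = span O (insert (Pi.single 0 d) T') := by
      rw [Submodule.map_span]
      congr 1
      show τ '' insert w₀ T' = _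
      rw [Set.image_insert_eq, hτw₀]
      congr 1
      exact Set.image_congr hτT' |>.trans (Set.image_id _)
    have hmap3 : Submodule.map (ρ : (Fin (n+1) → O) →ₗ[O] O × (Fin n → O))
        (span O (insert (Pi.single 0 d) T'))
        = (span O {d}).prod (span O T'') := by
      rw [Submodule.map_span]
      show span O (ρ '' insert (Pi.single 0 d) T') = _
      rw [Set.image_insert_eq, hρpsd, hρT', Submodule.span_insert,
        ← Submodule.map_span, ← Set.image_singleton (f := ⇑(LinearMap.inl O O (Fin n → O))),
        ← Submodule.map_span, LinearMap.prod_eq_sup_map]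
    -- quotient equivalences
    obtain ⟨m, c, ⟨E5⟩⟩ := IH T'' hT''fin
    refine ⟨m + 1, Fin.cons d c, ⟨?_⟩⟩
    have E1 := Submodule.Quotient.equiv (span O S) (span O (insert w₀ T')) σ hmap1
    have E2 := Submodule.Quotient.equiv _ _ τ hmap2
    have E3 := Submodule.Quotient.equiv _ _ ρ hmap3
    have E4 := prodQuotEquiv (O := O) (span O {d}) (span O T'')
    exact E1.trans (E2.trans (E3.trans (E4.trans ((LinearEquiv.prodCongr (LinearEquiv.refl O _) E5).trans
      ((LinearEquiv.prodCongr
        (Submodule.quotEquivOfEq (span O {d})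
          (span O {(Fin.cons d c : Fin (m+1) → O) 0}) (by rw [Fin.cons_zero]))
        (LinearEquiv.piCongrRight fun i => Submodule.quotEquivOfEq (span O {c i})
          (span O {(Fin.cons d c : Fin (m+1) → O) i.succ}) (by rw [Fin.cons_succ]))).trans
        (piSuccEquiv (O := O)
          (fun i : Fin (m+1) => O ⧸ (span O {(Fin.cons d c : Fin (m+1) → O) i} : Submodule O O))).symm)))))

end SNF

section Classify
variable {O : Type*} [CommRing O] [IsDomain O] [ValuationRing O]

/-- Every finitely presented module over a valuation ring is a finite direct sum of
cyclic modules. -/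
theorem exists_pi_cyclic (M : Type*) [AddCommGroup M] [Module O M]
    (h : Module.FinitePresentation O M) :
    ∃ (m : ℕ) (c : Fin m → O),
      Nonempty (M ≃ₗ[O] ((i : Fin m) → O ⧸ (span O {c i} : Submodule O O))) := by
  classical
  obtain ⟨s, hs, hk⟩ := h
  set E : (Fin (Fintype.card ↥s) → O) ≃ₗ[O] (↥s →₀ O) :=
    (LinearEquiv.funCongrLeft O O (Fintype.equivFin ↥s)).trans
      (Finsupp.linearEquivFunOnFinite O O ↥s).symm with hE
  set π : (Fin (Fintype.card ↥s) → O) →ₗ[O] M :=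
    (Finsupp.linearCombination O ((↑) : ↥s → M)).comp E.toLinearMap with hπ_def
  have hlc : Function.Surjective (Finsupp.linearCombination O ((↑) : ↥s → M)) := by
    apply LinearMap.range_eq_top.mp
    simpa only [Finsupp.range_linearCombination, Subtype.range_coe_subtype,
      Finset.setOf_mem] using hs
  have hπ : Function.Surjective π := hlc.comp E.surjective
  have hker : (LinearMap.ker π).FG := by
    rw [hπ_def, LinearMap.ker_comp, Submodule.comap_equiv_eq_map_symm]
    exact Submodule.FG.map E.symm.toLinearMap hk
  obtain ⟨F, hF⟩ := hker
  obtain ⟨m, c, ⟨E5⟩⟩ := snf _ _ F.finite_toSet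
  refine ⟨m, c, ⟨?_⟩⟩
  exact ((LinearMap.quotKerEquivOfSurjective π hπ).symm.trans
    (Submodule.quotEquivOfEq _ _ hF.symm)).trans E5
end Classify

section Lift
variable {O : Type*} [CommRing O] [IsDomain O] [ValuationRing O]

theorem peel_step {M2 N : Type*} [AddCommGroup M2] [Module O M2] [AddCommGroup N] [Module O N]
    (c : O) (g : M2 →ₗ[O] (O ⧸ (span O {c} : Submodule O O)) × N)
    (hg : Function.Surjective g)
    (hC : ∀ (a : O) (y : (O ⧸ (span O {c} : Submodule O O)) × N), a • y = 0 →
      ∃ x : M2, a • x = 0 ∧ g x - y ∈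
        (IsLocalRing.maximalIdeal O • ⊤ :
          Submodule O ((O ⧸ (span O {c} : Submodule O O)) × N)))
    (IH : ∀ (M2' : Submodule O M2) (g' : M2' →ₗ[O] N), Function.Surjective g' →
      (∀ (a : O) (y : N), a • y = 0 → ∃ x : M2', a • x = 0 ∧ g' x - y ∈
        (IsLocalRing.maximalIdeal O • ⊤ : Submodule O N)) →
      ∃ s' : N →ₗ[O] M2', ∀ y, g' (s' y) = y) :
    ∃ s : ((O ⧸ (span O {c} : Submodule O O)) × N) →ₗ[O] M2, ∀ y, g (s y) = y := by
  classical
  set mm := IsLocalRing.maximalIdeal O with hmm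
  have h1 : c • (((Submodule.Quotient.mk (1:O)) : O ⧸ (span O {c} : Submodule O O)), (0:N))
      = 0 := by
    rw [Prod.smul_mk, smul_zero, Prod.mk_eq_zero]
    refine ⟨?_, rfl⟩
    rw [← Submodule.Quotient.mk_smul, smul_eq_mul, mul_one, Submodule.Quotient.mk_eq_zero]
    exact Submodule.mem_span_singleton_self c
  obtain ⟨x1, hx1t, hx1⟩ := hC c (Submodule.Quotient.mk 1, 0) h1
  have hx1' := smul_top_prod_le mm hx1
  rw [Submodule.mem_prod] at hx1'
  have hfst1 : (g x1 - ((Submodule.Quotient.mk 1 : O ⧸ (span O {c} : Submodule O O)), (0:N))).1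
      = (g x1).1 - Submodule.Quotient.mk 1 := rfl
  obtain ⟨t, htm, ht⟩ := smul_top_quot mm (span O {c}) (hfst1 ▸ hx1'.1)
  rw [ideal_smul_top] at htm
  have hgx1 : (g x1).1 = Submodule.Quotient.mk (1 + t) := by
    have h' : (g x1).1 = Submodule.Quotient.mk t + Submodule.Quotient.mk 1 :=
      eq_add_of_sub_eq ht.symm
    rw [h', ← Submodule.Quotient.mk_add, add_comm t 1]
  have hu : IsUnit (1 + t) := by
    by_contra hnu
    have hmem : (1 + t) ∈ mm := (IsLocalRing.mem_maximalIdeal _).mpr hnu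
    have h1m : (1 : O) ∈ mm := by
      have := sub_mem hmem htm
      simpa using this
    exact (mem_nonunits_iff.mp ((IsLocalRing.mem_maximalIdeal _).mp h1m)) isUnit_one
  obtain ⟨uu, huu⟩ := hu
  set v : O := ↑uu⁻¹ with hv_def
  have hv : v * (1 + t) = 1 := by
    rw [hv_def, ← huu]
    exact Units.inv_mul uu
  set x₀ : M2 := v • x1 with hx₀_def
  have hx₀t : c • x₀ = 0 := by
    show c • (v • x1) = 0
    rw [smul_comm, hx1t, smul_zero]
  set w : N := (g x₀).2 with hw_def
  have hgx₀1 : (g x₀).1 = Submodule.Quotient.mk 1 := by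
    show (g (v • x1)).1 = _
    rw [map_smul]
    show v • (g x1).1 = _
    rw [hgx1, ← Submodule.Quotient.mk_smul, smul_eq_mul, hv]
  have hgx₀ : g x₀ = (Submodule.Quotient.mk 1, w) := Prod.ext hgx₀1 rfl
  have hcw : c • w = 0 := by
    have h0 : c • g x₀ = 0 := by rw [← map_smul, hx₀t, map_zero]
    have h2 := congrArg Prod.snd h0
    simpa [hw_def] using h2
  set M2' : Submodule O M2 := LinearMap.ker ((LinearMap.fst O _ N).comp g) with hM2'
  set g' : M2' →ₗ[O] N := (LinearMap.snd O _ N).comp (g.comp M2'.subtype) with hg'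
  have hmem' : ∀ z : M2', (g (M2'.subtype z)).1 = 0 := by
    intro z
    exact LinearMap.mem_ker.mp z.2
  have hg'app : ∀ z : M2', g' z = (g (z : M2)).2 := fun _ => rfl
  have hsurj' : Function.Surjective g' := by
    intro y
    obtain ⟨z, hz⟩ := hg (0, y)
    have hzm : z ∈ M2' := by
      refine LinearMap.mem_ker.mpr ?_
      show (g z).1 = 0
      rw [hz]
    refine ⟨⟨z, hzm⟩, ?_⟩
    rw [hg'app]
    show (g z).2 = y
    rw [hz]
  have hcond' : ∀ (a : O) (y : N), a • y = 0 → ∃ x : M2', a • x = 0 ∧ g' x - y ∈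
      (mm • ⊤ : Submodule O N) := by
    intro a y hy
    have hay : a • ((0 : O ⧸ (span O {c} : Submodule O O)), y) = 0 := by
      rw [Prod.smul_mk, smul_zero, hy]
      rfl
    obtain ⟨x, hxt, hx⟩ := hC a (0, y) hay
    have hx' := smul_top_prod_le mm hx
    rw [Submodule.mem_prod] at hx'
    have hfst2 : (g x - ((0 : O ⧸ (span O {c} : Submodule O O)), y)).1 = (g x).1 - 0 := rfl
    obtain ⟨t', ht'm, ht'⟩ := smul_top_quot mm (span O {c})
      (by rw [hfst2, sub_zero] at hx'; exact hx'.1)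
    rw [ideal_smul_top] at ht'm
    have hat : a • t' ∈ span O {c} := by
      have h0 : a • (g x).1 = 0 := by
        have h00 : a • g x = 0 := by rw [← map_smul, hxt, map_zero]
        exact congrArg Prod.fst h00
      rw [← ht', ← Submodule.Quotient.mk_smul, Submodule.Quotient.mk_eq_zero] at h0
      exact h0
    rw [Submodule.mem_span_singleton] at hat
    obtain ⟨r, hr⟩ := hat
    have hxm : x - t' • x₀ ∈ M2' := by
      refine LinearMap.mem_ker.mpr ?_
      show (g (x - t' • x₀)).1 = 0
      rw [map_sub, map_smul]
      show (g x).1 - t' • (g x₀).1 = 0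
      rw [hgx₀1, ← ht', ← Submodule.Quotient.mk_smul, smul_eq_mul, mul_one, sub_self]
    have hxt' : a • (x - t' • x₀) = 0 := by
      have hrc : a * t' = r * c := by
        have hr' := hr
        simp only [smul_eq_mul] at hr'
        exact hr'.symm
      have e1 : a • (x - t' • x₀) = a • x - (a * t') • x₀ := by
        rw [smul_sub, smul_smul]
      rw [e1, hxt, hrc, mul_smul, hx₀t, smul_zero, sub_zero]
    refine ⟨⟨x - t' • x₀, hxm⟩, ?_, ?_⟩
    · exact Subtype.ext (by simpa using hxt')
    · have e2 : g' ⟨x - t' • x₀, hxm⟩ = (g x).2 - t' • w := by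
        rw [hg'app]
        show (g (x - t' • x₀)).2 = _
        rw [map_sub, map_smul]
        rfl
      rw [e2]
      have e3 : (g x).2 - t' • w - y = ((g x).2 - y) - t' • w := by abel
      rw [e3]
      refine sub_mem ?_ (Submodule.smul_mem_smul ht'm Submodule.mem_top)
      simpa [Prod.snd_sub] using hx'.2
  obtain ⟨s', hs'⟩ := IH M2' g' hsurj' hcond'
  set z₀ : M2 := x₀ - (M2'.subtype (s' w)) with hz₀
  have hz₀c : c • z₀ = 0 := by
    show c • (x₀ - (M2'.subtype (s' w))) = 0
    rw [smul_sub, hx₀t, ← map_smul, ← map_smul, hcw, map_zero, map_zero, sub_zero]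
  have hgz₀ : g z₀ = (Submodule.Quotient.mk 1, 0) := by
    show g (x₀ - (M2'.subtype (s' w))) = _
    rw [map_sub, hgx₀]
    refine Prod.ext ?_ ?_
    · show Submodule.Quotient.mk 1 - (g (M2'.subtype (s' w))).1 = _
      rw [hmem' (s' w), sub_zero]
    · show w - (g (M2'.subtype (s' w))).2 = 0
      have : (g (M2'.subtype (s' w))).2 = g' (s' w) := rfl
      rw [this, hs', sub_self]
  set s₁ : (O ⧸ (span O {c} : Submodule O O)) →ₗ[O] M2 :=
    Submodule.liftQ (span O {c}) (LinearMap.toSpanSingleton O M2 z₀)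
      (by
        rw [Submodule.span_le, Set.singleton_subset_iff]
        rw [SetLike.mem_coe, LinearMap.mem_ker, LinearMap.toSpanSingleton_apply]
        exact hz₀c) with hs₁
  have hs₁app : ∀ q : O, s₁ (Submodule.Quotient.mk q) = q • z₀ := fun q => rfl
  refine ⟨s₁.coprod (M2'.subtype.comp s'), ?_⟩
  rintro ⟨u, y⟩
  obtain ⟨q, rfl⟩ := Submodule.Quotient.mk_surjective _ u
  show g (s₁ (Submodule.Quotient.mk q) + M2'.subtype (s' y)) = _
  rw [hs₁app, map_add, map_smul, hgz₀]
  have hgy : g (M2'.subtype (s' y)) = (0, y) := by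
    refine Prod.ext ?_ ?_
    · exact hmem' (s' y)
    · show (g (M2'.subtype (s' y))).2 = y
      have : (g (M2'.subtype (s' y))).2 = g' (s' y) := rfl
      rw [this, hs']
  rw [hgy, Prod.smul_mk]
  refine Prod.ext ?_ ?_
  · show q • Submodule.Quotient.mk 1 + 0 = Submodule.Quotient.mk q
    rw [add_zero, ← Submodule.Quotient.mk_smul, smul_eq_mul, mul_one]
  · show q • (0 : N) + y = y
    rw [smul_zero, zero_add]

end Lift

universe um

theorem lift_section {O : Type*} [CommRing O] [IsDomain O] [ValuationRing O] :
    ∀ (n : ℕ) (c : Fin n → O) (M2 : Type um) [AddCommGroup M2] [Module O M2]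
      (g : M2 →ₗ[O] ((i : Fin n) → O ⧸ (span O {c i} : Submodule O O))),
      Function.Surjective g →
      (∀ (a : O) (y : (i : Fin n) → O ⧸ (span O {c i} : Submodule O O)), a • y = 0 →
        ∃ x : M2, a • x = 0 ∧ g x - y ∈
          (IsLocalRing.maximalIdeal O • ⊤ :
            Submodule O ((i : Fin n) → O ⧸ (span O {c i} : Submodule O O)))) →
      ∃ s : ((i : Fin n) → O ⧸ (span O {c i} : Submodule O O)) →ₗ[O] M2, ∀ y, g (s y) = y := by
  intro n
  induction n with
  | zero =>
    intro c M2 _ _ g hg hC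
    exact ⟨0, fun y => Subsingleton.elim _ _⟩
  | succ n IH =>
    intro c M2 _ _ g hg hC
    set E := piSuccEquiv (O := O)
      (fun i : Fin (n+1) => O ⧸ (span O {c i} : Submodule O O)) with hE
    set g2 := E.toLinearMap.comp g with hg2_def
    have hg2app : ∀ x, g2 x = E (g x) := fun _ => rfl
    have hg2 : Function.Surjective g2 := E.surjective.comp hg
    have hC2 : ∀ (a : O) (y : (O ⧸ (span O {c 0} : Submodule O O)) ×
        ((i : Fin n) → O ⧸ (span O {c i.succ} : Submodule O O))), a • y = 0 →
        ∃ x : M2, a • x = 0 ∧ g2 x - y ∈ (IsLocalRing.maximalIdeal O • ⊤ : Submodule O _) := by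
      intro a y hy
      have hy' : a • E.symm y = 0 := by rw [← map_smul, hy, map_zero]
      obtain ⟨x, hxt, hx⟩ := hC a (E.symm y) hy'
      refine ⟨x, hxt, ?_⟩
      have hmap := smul_top_map_equiv (IsLocalRing.maximalIdeal O) E hx
      rw [map_sub, LinearEquiv.apply_symm_apply] at hmap
      exact hmap
    obtain ⟨s2, hs2⟩ := peel_step (c 0) g2 hg2 hC2
      (fun M2' g' hs' hc' => IH (fun i => c i.succ) M2' g' hs' hc')
    refine ⟨s2.comp E.toLinearMap, fun y => ?_⟩
    apply E.injective
    show E (g (s2 (E y))) = E y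
    rw [← hg2app, hs2]

theorem smul_top_map_le {O : Type*} [CommRing O] {M N : Type*} [AddCommGroup M] [Module O M]
    [AddCommGroup N] [Module O N] (I : Ideal O) (φ : M →ₗ[O] N) {x : M}
    (hx : x ∈ (I • ⊤ : Submodule O M)) : φ x ∈ (I • ⊤ : Submodule O N) := by
  have hle : (I • ⊤ : Submodule O M).map φ ≤ (I • ⊤ : Submodule O N) := by
    rw [Submodule.map_smul'']
    exact Submodule.smul_mono le_rfl le_top
  exact hle ⟨x, hx, rfl⟩


/-- Let `0 → M1 →f M2 →g M3 → 0` be a short exact sequence of finitely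
presented torsion modules over a valuation ring `O` with maximal ideal `m`.  For `a ∈ O`,
`F_a(M) ⊆ M ⊗ k = M/mM` denotes the image of the `a`-torsion submodule `M[a]` under the
quotient map `M → M/mM`; `fbar` and `gbar` are the maps induced by `f` and `g` on `M/mM`'s.
Then the sequence splits iff for every `a ∈ O` the induced complex
`0 → F_a(M1) → F_a(M2) → F_a(M3) → 0` is a short exact sequence. -/
theorem statement8 {O : Type*} [CommRing O] [IsDomain O] [ValuationRing O]
    {M1 M2 M3 : Type*}
    [AddCommGroup M1] [Module O M1] [AddCommGroup M2] [Module O M2]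
    [AddCommGroup M3] [Module O M3]
    (hM1 : Module.FinitePresentation O M1 ∧ Module.IsTorsion O M1)
    (hM2 : Module.FinitePresentation O M2 ∧ Module.IsTorsion O M2)
    (hM3 : Module.FinitePresentation O M3 ∧ Module.IsTorsion O M3)
    (f : M1 →ₗ[O] M2) (g : M2 →ₗ[O] M3)
    (hf : Function.Injective f) (hg : Function.Surjective g)
    (hfg : LinearMap.range f = LinearMap.ker g)
    (fbar : (M1 ⧸ (IsLocalRing.maximalIdeal O • ⊤ : Submodule O M1)) →ₗ[O]
        (M2 ⧸ (IsLocalRing.maximalIdeal O • ⊤ : Submodule O M2)))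
    (gbar : (M2 ⧸ (IsLocalRing.maximalIdeal O • ⊤ : Submodule O M2)) →ₗ[O]
        (M3 ⧸ (IsLocalRing.maximalIdeal O • ⊤ : Submodule O M3)))
    (hfbar : ∀ x : M1, fbar (Submodule.Quotient.mk x) = Submodule.Quotient.mk (f x))
    (hgbar : ∀ y : M2, gbar (Submodule.Quotient.mk y) = Submodule.Quotient.mk (g y)) :
    (∃ h : M2 →ₗ[O] M1, h.comp f = LinearMap.id) ↔
      ∀ a : O,
        (∀ x ∈ Submodule.map
            (Submodule.mkQ (IsLocalRing.maximalIdeal O • ⊤ : Submodule O M1))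
            (torsionBy O M1 a), fbar x = 0 → x = 0) ∧
        Submodule.map fbar
            (Submodule.map (Submodule.mkQ (IsLocalRing.maximalIdeal O • ⊤ : Submodule O M1))
              (torsionBy O M1 a)) =
          Submodule.map (Submodule.mkQ (IsLocalRing.maximalIdeal O • ⊤ : Submodule O M2))
              (torsionBy O M2 a) ⊓ LinearMap.ker gbar ∧
        Submodule.map gbar
            (Submodule.map (Submodule.mkQ (IsLocalRing.maximalIdeal O • ⊤ : Submodule O M2))
              (torsionBy O M2 a)) =
          Submodule.map (Submodule.mkQ (IsLocalRing.maximalIdeal O • ⊤ : Submodule O M3))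
            (torsionBy O M3 a) := by
  classical
  set mm := IsLocalRing.maximalIdeal O with hmm
  constructor
  · -- forward direction
    rintro ⟨h, hcomp⟩
    have hhf : ∀ x : M1, h (f x) = x := fun x => LinearMap.congr_fun hcomp x
    -- construct a section s of g with s (g x) = x - f (h x)
    set q : M2 →ₗ[O] M2 := LinearMap.id - f.comp h with hq
    have hqapp : ∀ x, q x = x - f (h x) := fun _ => rfl
    have hker : LinearMap.ker g ≤ LinearMap.ker q := by
      intro z hz
      rw [← hfg] at hz
      obtain ⟨w, rfl⟩ := hz
      rw [LinearMap.mem_ker, hqapp, hhf, sub_self]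
    set e3 := g.quotKerEquivOfSurjective hg with he3_def
    have he3 : ∀ x : M2, e3 (Submodule.Quotient.mk x) = g x := by
      intro x
      rfl
    set s : M3 →ₗ[O] M2 :=
      (Submodule.liftQ (LinearMap.ker g) q hker).comp e3.symm.toLinearMap with hs_def
    have hs1 : ∀ x : M2, s (g x) = x - f (h x) := by
      intro x
      have hsymm : e3.symm (g x) = Submodule.Quotient.mk x := by
        rw [LinearEquiv.symm_apply_eq, he3]
      show Submodule.liftQ (LinearMap.ker g) q hker (e3.symm (g x)) = _
      rw [hsymm, Submodule.liftQ_apply, hqapp]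
    have hgf0 : ∀ x : M1, g (f x) = 0 := by
      intro x
      have : f x ∈ LinearMap.ker g := hfg ▸ LinearMap.mem_range_self f x
      exact LinearMap.mem_ker.mp this
    have hs2 : ∀ y : M3, g (s y) = y := by
      intro y
      obtain ⟨x, rfl⟩ := hg y
      rw [hs1, map_sub, hgf0, sub_zero]
    intro a
    refine ⟨?_, ?_, ?_⟩
    · -- injectivity of fbar on F_a(M1)
      rintro ξ ⟨x, hx, rfl⟩ hfb
      rw [Submodule.mkQ_apply] at hfb ⊢
      rw [hfbar x] at hfb
      have hfx : f x ∈ (mm • ⊤ : Submodule O M2) := (Submodule.Quotient.mk_eq_zero _).mp hfb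
      have hx1 : x ∈ (mm • ⊤ : Submodule O M1) := by
        have := smul_top_map_le mm h hfx
        rwa [hhf] at this
      rw [Submodule.Quotient.mk_eq_zero]
      exact hx1
    · -- middle exactness
      apply le_antisymm
      · rintro ξ ⟨η, ⟨x, hx, rfl⟩, rfl⟩
        rw [Submodule.mkQ_apply, hfbar x]
        constructor
        · refine ⟨f x, ?_, rfl⟩
          simp only [SetLike.mem_coe, Submodule.mem_torsionBy_iff] at hx ⊢
          rw [← map_smul, hx, map_zero]
        · simp only [SetLike.mem_coe, LinearMap.mem_ker]
          rw [hgbar, hgf0]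
          exact Submodule.Quotient.mk_zero _
      · rintro ξ ⟨⟨y, hy, rfl⟩, hker2⟩
        rw [Submodule.mkQ_apply] at hker2 ⊢
        have hhy : h y ∈ torsionBy O M1 a := by
          simp only [SetLike.mem_coe, Submodule.mem_torsionBy_iff] at hy ⊢
          rw [← map_smul, hy, map_zero]
        refine ⟨Submodule.Quotient.mk (h y), ⟨h y, hhy, rfl⟩, ?_⟩
        rw [hfbar]
        simp only [SetLike.mem_coe, LinearMap.mem_ker] at hker2
        rw [hgbar] at hker2
        have hgy : g y ∈ (mm • ⊤ : Submodule O M3) :=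
          (Submodule.Quotient.mk_eq_zero _).mp hker2
        have hsgy : s (g y) ∈ (mm • ⊤ : Submodule O M2) := smul_top_map_le mm s hgy
        rw [hs1] at hsgy
        rw [Submodule.Quotient.eq]
        have : f (h y) - y = -(y - f (h y)) := by abel
        rw [this]
        exact neg_mem hsgy
    · -- right exactness
      apply le_antisymm
      · rintro ξ ⟨η, ⟨x, hx, rfl⟩, rfl⟩
        rw [Submodule.mkQ_apply, hgbar x]
        refine ⟨g x, ?_, rfl⟩
        simp only [SetLike.mem_coe, Submodule.mem_torsionBy_iff] at hx ⊢
        rw [← map_smul, hx, map_zero]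
      · rintro ξ ⟨z, hz, rfl⟩
        rw [Submodule.mkQ_apply]
        have hsz : s z ∈ torsionBy O M2 a := by
          simp only [SetLike.mem_coe, Submodule.mem_torsionBy_iff] at hz ⊢
          rw [← map_smul, hz, map_zero]
        refine ⟨Submodule.Quotient.mk (s z), ⟨s z, hsz, rfl⟩, ?_⟩
        rw [hgbar, hs2]
  · -- reverse direction
    intro hcond
    -- the lifting condition
    have hCg : ∀ (a : O) (y : M3), a • y = 0 →
        ∃ x : M2, a • x = 0 ∧ g x - y ∈ (mm • ⊤ : Submodule O M3) := by
      intro a y hy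
      have hmem : Submodule.Quotient.mk y ∈
          Submodule.map (Submodule.mkQ (mm • ⊤ : Submodule O M3)) (torsionBy O M3 a) :=
        ⟨y, (Submodule.mem_torsionBy_iff _ _).mpr hy, rfl⟩
      rw [← (hcond a).2.2] at hmem
      obtain ⟨η, ⟨x, hx, rfl⟩, hgb⟩ := hmem
      rw [Submodule.mkQ_apply, hgbar] at hgb
      refine ⟨x, (Submodule.mem_torsionBy_iff _ _).mp hx, ?_⟩
      exact (Submodule.Quotient.eq _).mp hgb
    obtain ⟨mN, c, ⟨e⟩⟩ := exists_pi_cyclic M3 hM3.1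
    set g3 := e.toLinearMap.comp g with hg3_def
    have hg3app : ∀ x, g3 x = e (g x) := fun _ => rfl
    have hg3 : Function.Surjective g3 := e.surjective.comp hg
    have hC3 : ∀ (a : O) (y : (i : Fin mN) → O ⧸ (span O {c i} : Submodule O O)), a • y = 0 →
        ∃ x : M2, a • x = 0 ∧ g3 x - y ∈ (mm • ⊤ : Submodule O _) := by
      intro a y hy
      have hy' : a • e.symm y = 0 := by rw [← map_smul, hy, map_zero]
      obtain ⟨x, hxt, hx⟩ := hCg a (e.symm y) hy'
      refine ⟨x, hxt, ?_⟩
      have hmap := smul_top_map_equiv mm e hx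
      rw [map_sub, LinearEquiv.apply_symm_apply] at hmap
      exact hmap
    obtain ⟨s3, hs3⟩ := lift_section mN c M2 g3 hg3 hC3
    set s : M3 →ₗ[O] M2 := s3.comp e.toLinearMap with hs_def
    have hgs : ∀ y, g (s y) = y := by
      intro y
      apply e.injective
      show e (g (s3 (e y))) = e y
      rw [← hg3app, hs3]
    set p : M2 →ₗ[O] M2 := LinearMap.id - s.comp g with hp
    have hpapp : ∀ x, p x = x - s (g x) := fun _ => rfl
    have hrange : ∀ x, p x ∈ LinearMap.range f := by
      intro x
      rw [hfg, LinearMap.mem_ker, hpapp, map_sub, hgs, sub_self]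
    set ef := LinearEquiv.ofInjective f hf with hef
    refine ⟨ef.symm.toLinearMap.comp (p.codRestrict (LinearMap.range f) hrange), ?_⟩
    apply LinearMap.ext
    intro x
    show ef.symm (LinearMap.codRestrict (LinearMap.range f) p hrange (f x)) = x
    apply ef.injective
    rw [LinearEquiv.apply_symm_apply]
    refine Subtype.ext ?_
    rw [LinearMap.codRestrict_apply]
    have hgfx : g (f x) = 0 := by
      have : f x ∈ LinearMap.ker g := hfg ▸ LinearMap.mem_range_self f x
      exact LinearMap.mem_ker.mp this
    rw [hpapp, hgfx, map_zero, sub_zero]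
    exact (LinearEquiv.ofInjective_apply f (h := hf) x).symm
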